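/- In a special abstract rank one group X with abelian unipotent subgroups A and B, for each nontrivial a in A, the element n(a) := a·b(a)⁻¹·a satisfies B^{n(a)} = A and A^{n(a)} = B. -/

import Mathlib

/-- Conjugate `S ^ g = g⁻¹ S g` of a subgroup. -/
def conjSub {X : Type*} [Group X] (S : Subgroup X) (g : X) : Subgroup X :=
  S.map ((MulAut.conj g⁻¹).toMonoidHom)

lemma mem_conjSub {X : Type*} [Group X] {S : Subgroup X} {g x : X} :
    x ∈ conjSub S g ↔ g * x * g⁻¹ ∈ S := by
  simp only [conjSub, Subgroup.mem_map, MulEquiv.coe_toMonoidHom, MulAut.conj_apply, inv_inv]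
  constructor
  · rintro ⟨s, hs, rfl⟩; group; simpa using hs
  · intro h; exact ⟨g * x * g⁻¹, h, by group⟩

lemma conjSub_mul {X : Type*} [Group X] (S : Subgroup X) (g h : X) :
    conjSub S (g * h) = conjSub (conjSub S g) h := by
  ext x; simp [mem_conjSub, mul_inv_rev, mul_assoc]

lemma conjSub_one {X : Type*} [Group X] (S : Subgroup X) : conjSub S 1 = S := by
  ext x; simp [mem_conjSub]

lemma conjSub_mem {X : Type*} [Group X] {S : Subgroup X} {g : X} (hg : g ∈ S) :
    conjSub S g = S := by
  ext x
  simp only [mem_conjSub]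
  constructor
  · intro h
    have := mul_mem (mul_mem (inv_mem hg) h) hg
    group at this; exact this
  · intro h; exact mul_mem (mul_mem hg h) (inv_mem hg)

theorem stmt1
    {X : Type*} [Group X] (A B : Subgroup X) (hAB : A ≠ B)
    (hAcomm : IsMulCommutative A) (hBcomm : IsMulCommutative B)
    (hgen : A ⊔ B = ⊤)
    (hab : ∀ a ∈ A, a ≠ 1 → ∃ b ∈ B, b ≠ 1 ∧ conjSub A b = conjSub B a)
    (hba : ∀ b ∈ B, b ≠ 1 → ∃ a ∈ A, a ≠ 1 ∧ conjSub B a = conjSub A b)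
    (bf : X → X)
    (hbf : ∀ a ∈ A, a ≠ 1 → bf a ∈ B ∧ bf a ≠ 1 ∧ conjSub A (bf a) = conjSub B a)
    (hbfu : ∀ a ∈ A, a ≠ 1 → ∀ b ∈ B, b ≠ 1 → conjSub A b = conjSub B a → b = bf a)
    (hspecial : ∀ a ∈ A, a ≠ 1 → bf a⁻¹ = (bf a)⁻¹)
    (a : X) (ha : a ∈ A) (ha1 : a ≠ 1) :
    conjSub B (a * (bf a)⁻¹ * a) = A ∧ conjSub A (a * (bf a)⁻¹ * a) = B := by
  obtain ⟨hbB, hb1, hconj⟩ := hbf a ha ha1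
  have hainv : conjSub A (bf a)⁻¹ = conjSub B a⁻¹ := by
    have h := hbf a⁻¹ (inv_mem ha) (inv_ne_one.mpr ha1)
    rw [hspecial a ha ha1] at h
    exact h.2.2
  constructor
  · have key : conjSub (conjSub A (bf a)) (bf a)⁻¹ = A := by
      rw [← conjSub_mul, mul_inv_cancel, conjSub_one]
    rw [conjSub_mul, conjSub_mul, ← hconj, key, conjSub_mem ha]
  · rw [conjSub_mul, conjSub_mul, conjSub_mem ha, hainv, ← conjSub_mul,
      inv_mul_cancel, conjSub_one]
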